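/- Given a self-adjoint one-step method Ψ_h on TQ (Ψ_h = Ψ_{-h}^{-1}) and a symmetric quadrature formula (c_i + c_{n−i} = 1 and b_i = b_{n−i}), the shooting-based discrete Lagrangian L_d(q_0, q_1; h) = h∑_{i=0}^n b_i L(q^i, v^i), where (q^{i+1}, v^{i+1}) = Ψ_{(c_{i+1}−c_i)h}(q^i, v^i), q^0 = q_0, q^n = q_1, is self-adjoint: L_d^*(q_0, q_1; h) := −L_d(q_1, q_0; −h) = L_d(q_0, q_1; h). -/

import Mathlib

open Finset

/-- The shooting boundary-value sequence: `(qⁱ⁺¹,vⁱ⁺¹) = Ψ_{(cᵢ₊₁−cᵢ)h}(qⁱ,vⁱ)` with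
`q⁰ = q₀` and `qⁿ = q₁`. Here a point of `TQ` is a pair `(q, v) : E × E`. -/
def IsShootingSeq {E : Type*} (n : ℕ) (Ψ : ℝ → E × E → E × E) (c : ℕ → ℝ)
    (h : ℝ) (q0 q1 : E) (s : ℕ → E × E) : Prop :=
  (∀ i < n, s (i + 1) = Ψ ((c (i + 1) - c i) * h) (s i)) ∧
    (s 0).1 = q0 ∧ (s n).1 = q1

/-- Given a self-adjoint one-step method `Ψ_h` on `TQ` (`Ψ_h = Ψ_{−h}⁻¹`)
and a symmetric quadrature formula (`cᵢ + c_{n−i} = 1`, `bᵢ = b_{n−i}`), the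
shooting-based discrete Lagrangian `L_d(q₀,q₁;h) = h ∑ᵢ bᵢ L(qⁱ,vⁱ)` is self-adjoint:
`L_d^*(q₀,q₁;h) := −L_d(q₁,q₀;−h) = L_d(q₀,q₁;h)`. -/
theorem shooting_discrete_lagrangian_self_adjoint {E : Type*} (n : ℕ)
    (Ψ : ℝ → E × E → E × E)
    (hself : ∀ (s : ℝ) (x : E × E), Ψ s (Ψ (-s) x) = x)
    (c b : ℕ → ℝ)
    (hc : ∀ i ≤ n, c i + c (n - i) = 1)
    (hb : ∀ i ≤ n, b i = b (n - i))
    (L : E × E → ℝ)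
    (Ld : E → E → ℝ → ℝ)
    (hLd : ∀ (h : ℝ) (q0 q1 : E) (s : ℕ → E × E),
      IsShootingSeq n Ψ c h q0 q1 s →
      Ld q0 q1 h = h * ∑ i ∈ Finset.range (n + 1), b i * L (s i))
    (h : ℝ) (q0 q1 : E)
    (hex : ∃ s : ℕ → E × E, IsShootingSeq n Ψ c h q0 q1 s) :
    -Ld q1 q0 (-h) = Ld q0 q1 h := by
  obtain ⟨s, hs⟩ := hex
  obtain ⟨hstep, h0, hn⟩ := hs
  -- reversed sequence
  set t : ℕ → E × E := fun i => s (n - i) with ht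
  have hrev : IsShootingSeq n Ψ c (-h) q1 q0 t := by
    refine ⟨?_, by simp [ht, hn], by simp [ht, h0]⟩
    intro i hi
    have h1 : n - (i + 1) < n := by omega
    have h2 : n - (i + 1) + 1 = n - i := by omega
    have hstep' := hstep (n - (i + 1)) h1
    rw [h2] at hstep'
    have hci : c (i + 1) + c (n - (i + 1)) = 1 := hc (i + 1) (by omega)
    have hci' : c i + c (n - i) = 1 := hc i (by omega)
    have hd : c (n - i) - c (n - (i + 1)) = c (i + 1) - c i := by linarith
    rw [hd] at hstep'
    have : t (i + 1) = Ψ (-((c (i + 1) - c i) * h)) (t i) := by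
      have := hself (-((c (i + 1) - c i) * h)) (s (n - (i + 1)))
      simp only [neg_neg] at this
      rw [ht]
      simp only
      rw [hstep', this]
    rw [this]
    ring_nf
  have e1 := hLd h q0 q1 s ⟨hstep, h0, hn⟩
  have e2 := hLd (-h) q1 q0 t hrev
  have hsum : ∑ i ∈ Finset.range (n + 1), b i * L (t i)
      = ∑ i ∈ Finset.range (n + 1), b i * L (s i) := by
    have := Finset.sum_range_reflect (fun i => b i * L (s i)) (n + 1)
    simp only [Nat.add_sub_cancel] at this
    rw [← this]
    refine Finset.sum_congr rfl ?_
    intro i hi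
    rw [Finset.mem_range] at hi
    rw [hb i (by omega), ht]
  rw [e1, e2, hsum]
  ring
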